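/- There exists a family (S_α) of control semigroups indexed by the ordinals α ≤ ω₁, where ω₁ is the first uncountable ordinal, such that: (i) for all α < β ≤ ω₁, S_β ⪯ S_α but not S_α ⪯ S_β; (ii) for all α < β ≤ ω₁ there exists a metric space X with asdim_{S_α} X ≠ asdim_{S_β} X (so the map α ↦ S_α is injective into the quotient of control semigroups by dim-equivalence, and order-reversing); and (iii) for every α < ω₁, the semigroup S_α is mono-bounded at ∞. -/

import Mathlib

open Filter Set Metric Topology
open scoped NNReal ENNReal

/-- A large-scale (asymptotic) dim-control function: continuous, increasing,
eventually at least the identity, tending to infinity. -/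
def IsLSControl (f : ℝ≥0 → ℝ≥0) : Prop :=
  Continuous f ∧ Monotone f ∧ (∀ᶠ x in atTop, x ≤ f x) ∧ Tendsto f atTop atTop

/-- Asymptotically linear: coincides with a linear function on a neighborhood of infinity. -/
def IsAsympLinear (f : ℝ≥0 → ℝ≥0) : Prop :=
  ∃ a b : ℝ≥0, ∀ᶠ x in atTop, f x = a * x + b

/-- A (large-scale) control semigroup. -/
def IsControlSemigroup (S : Set (ℝ≥0 → ℝ≥0)) : Prop :=
  (∀ f ∈ S, IsLSControl f) ∧
  (∀ f, IsLSControl f → IsAsympLinear f → f ∈ S) ∧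
  (∀ f ∈ S, ∀ g ∈ S, f ∘ g ∈ S)

/-- A family of subsets is `s`-disjoint if distinct members are at distance `> s`. -/
def SDisjoint {X : Type*} [MetricSpace X] (s : ℝ≥0) (𝒰 : Set (Set X)) : Prop :=
  ∀ U ∈ 𝒰, ∀ V ∈ 𝒰, U ≠ V → ∀ x ∈ U, ∀ y ∈ V, (s : ℝ) < dist x y

/-- A family of subsets is `D`-bounded if each member has diameter at most `D`. -/
def BoundedBy {X : Type*} [MetricSpace X] (D : ℝ≥0) (𝒰 : Set (Set X)) : Prop :=
  ∀ U ∈ 𝒰, EMetric.diam U ≤ (D : ℝ≥0∞)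

/-- `asdim_S X ≤ n`. -/
def ASDimLE (S : Set (ℝ≥0 → ℝ≥0)) (X : Type*) [MetricSpace X] (n : ℕ) : Prop :=
  ∃ f ∈ S, ∃ s₀ : ℝ≥0, ∀ s : ℝ≥0, s₀ ≤ s →
    ∃ 𝒰 : Fin (n + 1) → Set (Set X),
      (⋃ i, ⋃₀ 𝒰 i) = univ ∧ ∀ i, SDisjoint s (𝒰 i) ∧ BoundedBy (f s) (𝒰 i)

/-- The `S`-controlled asymptotic dimension, as an element of `ℕ∞`. -/
noncomputable def ASDim (S : Set (ℝ≥0 → ℝ≥0)) (X : Type*) [MetricSpace X] : ℕ∞ :=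
  sInf {k : ℕ∞ | ∃ n : ℕ, k = n ∧ ASDimLE S X n}

/-- `S₁ ⪯ S₂` : `S₂` is finer than `S₁`. -/
def Preceq (S₁ S₂ : Set (ℝ≥0 → ℝ≥0)) : Prop :=
  ∀ f ∈ S₂, ∃ g ∈ S₁, ∀ᶠ x in atTop, f x ≤ g x

/-- A control semigroup is mono-bounded at infinity if some large-scale dim-control
function eventually strictly dominates all its members. -/
def MonoBounded (S : Set (ℝ≥0 → ℝ≥0)) : Prop :=
  ∃ f : ℝ≥0 → ℝ≥0, IsLSControl f ∧ ∀ g ∈ S, ∀ᶠ x in atTop, g x < f x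

namespace ChainAux

abbrev Fn := ℝ≥0 → ℝ≥0

lemma isLS_id : IsLSControl (id : Fn) :=
  ⟨continuous_id, monotone_id, Eventually.of_forall fun _ => le_rfl, tendsto_id⟩

lemma isLS_comp {f g : Fn} (hf : IsLSControl f) (hg : IsLSControl g) :
    IsLSControl (f ∘ g) := by
  obtain ⟨fc, fm, fe, ft⟩ := hf
  obtain ⟨gc, gm, ge, gt⟩ := hg
  refine ⟨fc.comp gc, fm.comp gm, ?_, ft.comp gt⟩
  filter_upwards [ge, gt.eventually fe] with x h1 h2
  exact h1.trans h2

def lam (n : ℕ) : Fn := fun x => ((n : ℝ≥0) + 1) * (x + 1)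

lemma isLS_lam (n : ℕ) : IsLSControl (lam n) := by
  refine ⟨by unfold lam; continuity, ?_, Eventually.of_forall fun x => ?_, ?_⟩
  · intro a b hab
    exact mul_le_mul_right (by exact add_le_add_left hab 1) _
  · calc x ≤ x + 1 := le_add_of_nonneg_right (zero_le)
    _ = 1 * (x + 1) := (one_mul _).symm
    _ ≤ ((n : ℝ≥0) + 1) * (x + 1) := mul_le_mul_left (le_add_of_nonneg_left (zero_le)) _
  · apply Filter.tendsto_atTop_mono (f := fun x : ℝ≥0 => x)
    · intro x
      calc x ≤ x + 1 := le_add_of_nonneg_right (zero_le)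
      _ = 1 * (x + 1) := (one_mul _).symm
      _ ≤ ((n : ℝ≥0) + 1) * (x + 1) := mul_le_mul_left (le_add_of_nonneg_left (zero_le)) _
    · exact tendsto_id

def Lam : Set Fn := Set.range lam

/-- Words over a set of functions: all finite compositions (including the empty one). -/
def Words (T : Set Fn) : Set Fn :=
  {h | ∃ l : List Fn, (∀ g ∈ l, g ∈ T) ∧ h = l.foldr (· ∘ ·) id}

lemma mem_words_self {T : Set Fn} {g : Fn} (hg : g ∈ T) : g ∈ Words T :=
  ⟨[g], by simpa using hg, by simp [Function.comp_id]⟩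

lemma id_mem_words (T : Set Fn) : (id : Fn) ∈ Words T := ⟨[], by simp, rfl⟩

lemma words_mono {T T' : Set Fn} (h : T ⊆ T') : Words T ⊆ Words T' := by
  rintro w ⟨l, hl, rfl⟩
  exact ⟨l, fun g hg => h (hl g hg), rfl⟩

lemma comp_mem_words {T : Set Fn} {w₁ w₂ : Fn} (h1 : w₁ ∈ Words T) (h2 : w₂ ∈ Words T) :
    w₁ ∘ w₂ ∈ Words T := by
  obtain ⟨l₁, hl₁, rfl⟩ := h1
  obtain ⟨l₂, hl₂, rfl⟩ := h2
  refine ⟨l₁ ++ l₂, fun g hg => ?_, ?_⟩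
  · rcases List.mem_append.mp hg with h | h
    · exact hl₁ g h
    · exact hl₂ g h
  · induction l₁ with
    | nil => simp
    | cons a l ih =>
        simp only [List.cons_append, List.foldr_cons]
        rw [Function.comp_assoc, ih (fun g hg => hl₁ g (List.mem_cons_of_mem a hg))]

lemma words_isLS {T : Set Fn} (hT : ∀ g ∈ T, IsLSControl g) :
    ∀ w ∈ Words T, IsLSControl w := by
  rintro w ⟨l, hl, rfl⟩
  induction l with
  | nil => exact isLS_id
  | cons a l ih =>
      rw [List.foldr_cons]
      exact isLS_comp (hT a (hl a List.mem_cons_self)) (ih fun g hg => hl g (List.mem_cons_of_mem a hg))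

lemma words_countable {T : Set Fn} (hT : T.Countable) : (Words T).Countable := by
  have : Countable T := hT.to_subtype
  have hsub : Words T ⊆ (fun l : List Fn => l.foldr (· ∘ ·) id) '' {l | ∀ g ∈ l, g ∈ T} := by
    rintro w ⟨l, hl, rfl⟩
    exact ⟨l, hl, rfl⟩
  refine Set.Countable.mono hsub (Set.Countable.image ?_ _)
  have e : {l : List Fn | ∀ g ∈ l, g ∈ T} = Set.range (fun l : List T => l.map Subtype.val) := by
    ext l
    constructor
    · intro hl
      refine ⟨l.attach.map (fun x => ⟨x.1, hl _ x.2⟩), ?_⟩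
      simp [List.map_map]
    · rintro ⟨m, rfl⟩
      intro g hg
      rw [List.mem_map] at hg
      obtain ⟨a, _, rfl⟩ := hg
      exact a.2
  rw [e]; exact Set.countable_range _


noncomputable def dcoef (e : ℕ → Fn) (j : ℕ) : ℝ≥0 :=
  ((j : ℝ≥0) + 3) * ((2 * (j : ℝ≥0) + 8) + ∑ i ∈ Finset.range (j + 2), e i ((j : ℝ≥0) + 3))

noncomputable def domF (e : ℕ → Fn) (x : ℝ≥0) : ℝ≥0 :=
  ∑ j ∈ Finset.range (⌈x⌉₊ + 1), min 1 (x - (j : ℝ≥0)) * dcoef e j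

lemma domF_eq (e : ℕ → Fn) (x : ℝ≥0) {N : ℕ} (hN : ⌈x⌉₊ + 1 ≤ N) :
    domF e x = ∑ j ∈ Finset.range N, min 1 (x - (j : ℝ≥0)) * dcoef e j := by
  unfold domF
  apply Finset.sum_subset (Finset.range_subset_range.mpr hN)
  intro j _ hj
  have hj' : ⌈x⌉₊ + 1 ≤ j := by
    by_contra h
    exact hj (Finset.mem_range.mpr (lt_of_not_ge h))
  have hx : x ≤ (j : ℝ≥0) := by
    calc x ≤ (⌈x⌉₊ : ℝ≥0) := Nat.le_ceil x
    _ ≤ (j : ℝ≥0) := by exact_mod_cast le_trans (Nat.le_succ _) hj'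
  rw [tsub_eq_zero_of_le hx]
  simp

lemma domF_monotone (e : ℕ → Fn) : Monotone (domF e) := by
  intro x y hxy
  have hN : ⌈x⌉₊ + 1 ≤ ⌈y⌉₊ + 1 := by
    have := Nat.ceil_le_ceil (R := ℝ≥0) hxy
    omega
  rw [domF_eq e x hN, domF]
  apply Finset.sum_le_sum
  intro j _
  exact mul_le_mul_left (min_le_min le_rfl (tsub_le_tsub_right hxy _)) _

lemma domF_continuous (e : ℕ → Fn) : Continuous (domF e) := by
  rw [continuous_iff_continuousAt]
  intro x
  set N : ℕ := ⌈x⌉₊ + 2 with hN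
  have hx : x < ((⌈x⌉₊ + 1 : ℕ) : ℝ≥0) := by
    push_cast
    exact lt_of_le_of_lt (Nat.le_ceil x) (lt_add_of_pos_right _ one_pos)
  have hmem : Iio ((⌈x⌉₊ + 1 : ℕ) : ℝ≥0) ∈ 𝓝 x := Iio_mem_nhds hx
  have heq : ∀ y ∈ Iio ((⌈x⌉₊ + 1 : ℕ) : ℝ≥0),
      domF e y = ∑ j ∈ Finset.range N, min 1 (y - (j : ℝ≥0)) * dcoef e j := by
    intro y hy
    apply domF_eq
    have : ⌈y⌉₊ ≤ ⌈x⌉₊ + 1 := by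
      have h1 : y ≤ ((⌈x⌉₊ + 1 : ℕ) : ℝ≥0) := le_of_lt hy
      calc ⌈y⌉₊ ≤ ⌈((⌈x⌉₊ + 1 : ℕ) : ℝ≥0)⌉₊ := Nat.ceil_le_ceil h1
      _ = ⌈x⌉₊ + 1 := Nat.ceil_natCast _
    omega
  have hcont : Continuous (fun y : ℝ≥0 => ∑ j ∈ Finset.range N, min 1 (y - (j : ℝ≥0)) * dcoef e j) := by
    apply continuous_finset_sum
    intro j _
    exact (continuous_const.min ((continuous_id.sub continuous_const))).mul continuous_const
  exact (hcont.continuousAt).congr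
    (Filter.eventuallyEq_of_mem hmem fun y hy => (heq y hy).symm)

lemma dcoef_le_domF (e : ℕ → Fn) {x : ℝ≥0} {j : ℕ} (hj : (j : ℝ≥0) + 1 ≤ x) :
    dcoef e j ≤ domF e x := by
  have hjr : j < ⌈x⌉₊ + 1 := by
    have : ((j:ℕ) : ℝ≥0) ≤ x := le_trans (le_add_of_nonneg_right (zero_le)) hj
    have := Nat.le_ceil x
    have hjc : (j : ℕ) ≤ ⌈x⌉₊ := by
      rw [← Nat.ceil_natCast (R := ℝ≥0) j]
      exact Nat.ceil_le_ceil ‹((j:ℕ) : ℝ≥0) ≤ x›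
    omega
  have hramp : min 1 (x - (j : ℝ≥0)) = 1 := by
    apply min_eq_left
    rw [le_tsub_iff_left (le_trans (le_add_of_nonneg_right (zero_le)) hj)]
    exact hj
  calc dcoef e j = min 1 (x - (j : ℝ≥0)) * dcoef e j := by rw [hramp, one_mul]
  _ ≤ domF e x := by
      unfold domF
      exact Finset.single_le_sum (f := fun k : ℕ => min 1 (x - (k : ℝ≥0)) * dcoef e k)
        (fun i _ => zero_le) (Finset.mem_range.mpr hjr)

lemma domF_key (e : ℕ → Fn) (he : ∀ i, Monotone (e i)) (i : ℕ) {x : ℝ≥0}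
    (hx : (i : ℝ≥0) + 1 ≤ x) :
    (x + 1) * ((2 * x + 4) + e i (x + 1)) ≤ domF e x := by
  -- m := ⌊x⌋₊ ≥ i+1, write m = j+1
  have hx1 : (1 : ℝ≥0) ≤ x := le_trans (le_add_of_nonneg_left (zero_le)) hx
  have him : i + 1 ≤ ⌊x⌋₊ := by
    apply Nat.le_floor
    push_cast
    exact hx
  obtain ⟨j, hj⟩ : ∃ j, ⌊x⌋₊ = j + 1 := ⟨⌊x⌋₊ - 1, by omega⟩
  have hjx : (j : ℝ≥0) + 1 ≤ x := by
    have := Nat.floor_le (zero_le : 0 ≤ x)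
    rw [hj] at this
    push_cast at this
    exact this
  have hxj : x < (j : ℝ≥0) + 2 := by
    have := Nat.lt_floor_add_one x
    rw [hj] at this
    push_cast at this
    calc x < (j:ℝ≥0) + 1 + 1 := this
    _ = (j : ℝ≥0) + 2 := by ring
  refine le_trans ?_ (dcoef_le_domF e hjx)
  unfold dcoef
  have hij : i ∈ Finset.range (j + 2) := by
    apply Finset.mem_range.mpr
    omega
  have h1 : x + 1 ≤ (j : ℝ≥0) + 3 := by
    calc x + 1 ≤ ((j : ℝ≥0) + 2) + 1 := add_le_add_left (le_of_lt hxj) 1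
    _ = (j : ℝ≥0) + 3 := by ring
  have h2 : 2 * x + 4 ≤ 2 * (j : ℝ≥0) + 8 := by
    calc 2 * x + 4 ≤ 2 * ((j:ℝ≥0)+2) + 4 := by
          exact add_le_add_left (mul_le_mul_right (le_of_lt hxj) 2) 4
    _ ≤ 2 * (j : ℝ≥0) + 8 := by
          rw [mul_add]
          ring_nf
          exact le_refl _
  have h3 : e i (x + 1) ≤ ∑ i' ∈ Finset.range (j + 2), e i' ((j : ℝ≥0) + 3) := by
    calc e i (x + 1) ≤ e i ((j : ℝ≥0) + 3) := he i h1
    _ ≤ _ := Finset.single_le_sum (f := fun i' => e i' ((j : ℝ≥0) + 3)) (fun _ _ => zero_le) hij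
  exact mul_le_mul' h1 (add_le_add h2 h3)

lemma le_domF (e : ℕ → Fn) {x : ℝ≥0} (hx : 1 ≤ x) : x ≤ domF e x := by
  obtain ⟨j, hj⟩ : ∃ j, ⌊x⌋₊ = j + 1 := ⟨⌊x⌋₊ - 1, by
    have := Nat.le_floor (α := ℝ≥0) (n := 1) (by simpa using hx)
    omega⟩
  have hjx : (j : ℝ≥0) + 1 ≤ x := by
    have := Nat.floor_le (zero_le : 0 ≤ x); rw [hj] at this; push_cast at this; exact this
  have hxj : x < (j : ℝ≥0) + 2 := by
    have := Nat.lt_floor_add_one x; rw [hj] at this; push_cast at this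
    calc x < (j:ℝ≥0) + 1 + 1 := this
    _ = (j : ℝ≥0) + 2 := by ring
  refine le_trans ?_ (dcoef_le_domF e hjx)
  unfold dcoef
  calc x ≤ (j : ℝ≥0) + 2 := le_of_lt hxj
  _ ≤ ((j : ℝ≥0) + 3) * 1 := by rw [mul_one]; exact add_le_add_right (by norm_num) _
  _ ≤ ((j : ℝ≥0) + 3) * ((2 * (j : ℝ≥0) + 8) + ∑ i ∈ Finset.range (j + 2), e i ((j : ℝ≥0) + 3)) := by
      apply mul_le_mul_right
      calc (1:ℝ≥0) ≤ 2 * (j : ℝ≥0) + 8 := by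
            calc (1:ℝ≥0) ≤ 8 := by norm_num
            _ ≤ 2 * (j : ℝ≥0) + 8 := le_add_of_nonneg_left (zero_le)
      _ ≤ _ := le_add_of_nonneg_right (zero_le)

lemma domF_isLS (e : ℕ → Fn) : IsLSControl (domF e) := by
  refine ⟨domF_continuous e, domF_monotone e, ?_, ?_⟩
  · rw [eventually_atTop]
    exact ⟨1, fun x hx => le_domF e hx⟩
  · apply tendsto_atTop_mono' atTop (f₁ := fun x : ℝ≥0 => x)
    · rw [EventuallyLE, eventually_atTop]
      exact ⟨1, fun x hx => le_domF e hx⟩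
    · exact tendsto_id

lemma domF_growth (e : ℕ → Fn) {x : ℝ≥0} (hx : 1 ≤ x) :
    (x + 1) * (2 * x + 4) ≤ domF e x := by
  obtain ⟨j, hj⟩ : ∃ j, ⌊x⌋₊ = j + 1 := ⟨⌊x⌋₊ - 1, by
    have := Nat.le_floor (α := ℝ≥0) (n := 1) (by simpa using hx)
    omega⟩
  have hjx : (j : ℝ≥0) + 1 ≤ x := by
    have := Nat.floor_le (zero_le : 0 ≤ x); rw [hj] at this; push_cast at this; exact this
  have hxj : x < (j : ℝ≥0) + 2 := by
    have := Nat.lt_floor_add_one x; rw [hj] at this; push_cast at this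
    calc x < (j : ℝ≥0) + 1 + 1 := this
    _ = (j : ℝ≥0) + 2 := by ring
  refine le_trans ?_ (dcoef_le_domF e hjx)
  unfold dcoef
  have h1 : x + 1 ≤ (j : ℝ≥0) + 3 := by
    calc x + 1 ≤ ((j : ℝ≥0) + 2) + 1 := add_le_add_left (le_of_lt hxj) 1
    _ = (j : ℝ≥0) + 3 := by ring
  have h2 : 2 * x + 4 ≤ 2 * (j : ℝ≥0) + 8 := by
    calc 2 * x + 4 ≤ 2 * ((j : ℝ≥0) + 2) + 4 :=
          add_le_add_left (mul_le_mul_right (le_of_lt hxj) 2) 4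
    _ ≤ 2 * (j : ℝ≥0) + 8 := by rw [mul_add]; ring_nf; exact le_refl _
  calc (x + 1) * (2 * x + 4) ≤ ((j : ℝ≥0) + 3) * (2 * (j : ℝ≥0) + 8) := mul_le_mul' h1 h2
  _ ≤ _ := mul_le_mul_right (le_add_of_nonneg_right (zero_le)) _

noncomputable def dummyF : Fn := fun x => (x + 1) * (2 * x + 4)

lemma isLS_dummyF : IsLSControl dummyF := by
  refine ⟨by unfold dummyF; continuity, ?_, Eventually.of_forall fun x => ?_, ?_⟩
  · intro a b hab
    exact mul_le_mul' (add_le_add_left hab 1) (add_le_add_left (mul_le_mul_right hab 2) 4)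
  · calc x ≤ x + 1 := le_add_of_nonneg_right (zero_le)
    _ = (x + 1) * 1 := (mul_one _).symm
    _ ≤ dummyF x := mul_le_mul_right (le_trans (by norm_num) (le_add_of_nonneg_left (zero_le))) _
  · apply tendsto_atTop_mono (f := fun x : ℝ≥0 => x)
    · intro x
      calc x ≤ x + 1 := le_add_of_nonneg_right (zero_le)
      _ = (x + 1) * 1 := (mul_one _).symm
      _ ≤ dummyF x := mul_le_mul_right (le_trans (by norm_num) (le_add_of_nonneg_left (zero_le))) _
    · exact tendsto_id

open scoped Classical in
noncomputable def Dom (S : Set Fn) : Fn :=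
  if h : S.Nonempty ∧ S.Countable then domF (h.2.exists_eq_range h.1).choose else dummyF

lemma Dom_isLS (S : Set Fn) : IsLSControl (Dom S) := by
  classical
  unfold Dom
  split
  · exact domF_isLS _
  · exact isLS_dummyF

lemma Dom_growth (S : Set Fn) {x : ℝ≥0} (hx : 1 ≤ x) :
    (x + 1) * (2 * x + 4) ≤ Dom S x := by
  classical
  unfold Dom
  split
  · exact domF_growth _ hx
  · exact le_rfl

lemma Dom_key {S : Set Fn} (hmono : ∀ w ∈ S, Monotone w) (hne : S.Nonempty) (hc : S.Countable)
    {w : Fn} (hw : w ∈ S) :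
    ∃ m : ℝ≥0, ∀ x : ℝ≥0, m ≤ x → (x + 1) * ((2 * x + 4) + w (x + 1)) ≤ Dom S x := by
  classical
  unfold Dom
  rw [dif_pos ⟨hne, hc⟩]
  have hspec := (And.intro hne hc).2.exists_eq_range (And.intro hne hc).1 |>.choose_spec
  set e := ((And.intro hne hc).2.exists_eq_range (And.intro hne hc).1).choose with he
  have hwmem : w ∈ Set.range e := by rw [← hspec]; exact hw
  obtain ⟨i, rfl⟩ := hwmem
  refine ⟨(i : ℝ≥0) + 1, fun x hx => ?_⟩
  apply domF_key
  · intro i'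
    apply hmono
    rw [hspec]
    exact ⟨i', rfl⟩
  · exact hx

noncomputable def foF : (α : Ordinal.{0}) → (∀ β, β < α → Fn) → Fn :=
  fun α IH => Dom (Words (Lam ∪ {h | ∃ β, ∃ hβ : β < α, h = IH β hβ}))

noncomputable def fo : Ordinal.{0} → Fn := Ordinal.lt_wf.fix foF

lemma fo_eq (α : Ordinal.{0}) : fo α = Dom (Words (Lam ∪ fo '' Iio α)) := by
  have h : fo α = foF α (fun β _ => fo β) := Ordinal.lt_wf.fix_eq foF α
  rw [h]
  unfold foF
  apply congrArg Dom
  apply congrArg Words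
  apply congrArg (Lam ∪ ·)
  ext g
  simp only [Set.mem_setOf_eq, Set.mem_image, mem_Iio]
  exact ⟨fun ⟨β, hβ, e⟩ => ⟨β, hβ, e.symm⟩, fun ⟨β, hβ, e⟩ => ⟨β, hβ, e.symm⟩⟩

lemma fo_isLS (α : Ordinal.{0}) : IsLSControl (fo α) := by
  rw [fo_eq]; exact Dom_isLS _

lemma base_isLS (T : Set Ordinal.{0}) : ∀ g ∈ Lam ∪ fo '' T, IsLSControl g := by
  rintro g (⟨n, rfl⟩ | ⟨β, _, rfl⟩)
  · exact isLS_lam n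
  · exact fo_isLS β

lemma base_countable {α : Ordinal.{0}} (hα : α < (Cardinal.aleph 1).ord) :
    (Lam ∪ fo '' Iio α).Countable := by
  apply Set.Countable.union (Set.countable_range lam)
  apply Set.Countable.image
  rw [Cardinal.countable_iff_lt_aleph_one, Ordinal.mk_Iio_ordinal]
  have h1 : α.card < Cardinal.aleph 1 := Cardinal.lt_ord.mp hα
  simpa using Cardinal.lift_lt.{0,1}.mpr h1

lemma fo_key {α : Ordinal.{0}} (hα : α < (Cardinal.aleph 1).ord) {w : Fn}
    (hw : w ∈ Words (Lam ∪ fo '' Iio α)) :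
    ∃ m : ℝ≥0, ∀ x : ℝ≥0, m ≤ x → (x + 1) * ((2 * x + 4) + w (x + 1)) ≤ fo α x := by
  rw [fo_eq]
  apply Dom_key _ ⟨id, id_mem_words _⟩ (words_countable (base_countable hα)) hw
  intro w' hw'
  exact (words_isLS (base_isLS _) w' hw').2.1

lemma fo_growth (α : Ordinal.{0}) {x : ℝ≥0} (hx : 1 ≤ x) :
    (x + 1) * (2 * x + 4) ≤ fo α x := by
  rw [fo_eq]; exact Dom_growth _ hx
def SBase (α : Ordinal.{0}) : Set Fn := Lam ∪ fo '' Iic α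

noncomputable def SG (α : Ordinal.{0}) : Set Fn :=
  {h | IsLSControl h ∧ ∃ w ∈ Words (SBase α), ∀ᶠ x in atTop, h x ≤ w x}

lemma words_SBase_isLS (α : Ordinal.{0}) : ∀ w ∈ Words (SBase α), IsLSControl w :=
  words_isLS (base_isLS (Iic α))

lemma lam_le (a b : ℝ≥0) (x : ℝ≥0) : a * x + b ≤ lam (⌈a⌉₊ + ⌈b⌉₊) x := by
  unfold lam
  have ha : a ≤ ((⌈a⌉₊ + ⌈b⌉₊ : ℕ) : ℝ≥0) + 1 := by
    calc a ≤ (⌈a⌉₊ : ℝ≥0) := Nat.le_ceil a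
    _ ≤ ((⌈a⌉₊ + ⌈b⌉₊ : ℕ) : ℝ≥0) := by exact_mod_cast Nat.le_add_right _ _
    _ ≤ _ := le_add_of_nonneg_right (zero_le)
  have hb : b ≤ ((⌈a⌉₊ + ⌈b⌉₊ : ℕ) : ℝ≥0) + 1 := by
    calc b ≤ (⌈b⌉₊ : ℝ≥0) := Nat.le_ceil b
    _ ≤ ((⌈a⌉₊ + ⌈b⌉₊ : ℕ) : ℝ≥0) := by exact_mod_cast Nat.le_add_left _ _
    _ ≤ _ := le_add_of_nonneg_right (zero_le)
  calc a * x + b ≤ (((⌈a⌉₊ + ⌈b⌉₊ : ℕ) : ℝ≥0) + 1) * x + (((⌈a⌉₊ + ⌈b⌉₊ : ℕ) : ℝ≥0) + 1) :=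
        add_le_add (mul_le_mul_left ha x) hb
  _ = _ := by ring

lemma SG_isCS (α : Ordinal.{0}) : IsControlSemigroup (SG α) := by
  refine ⟨fun f hf => hf.1, ?_, ?_⟩
  · rintro f hf ⟨a, b, hab⟩
    refine ⟨hf, lam (⌈a⌉₊ + ⌈b⌉₊), mem_words_self (Or.inl ⟨_, rfl⟩), ?_⟩
    filter_upwards [hab] with x hx
    rw [hx]
    exact lam_le a b x
  · rintro f ⟨hf, w1, hw1, he1⟩ g ⟨hg, w2, hw2, he2⟩
    refine ⟨isLS_comp hf hg, w1 ∘ w2, comp_mem_words hw1 hw2, ?_⟩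
    have w1mono := (words_SBase_isLS α w1 hw1).2.1
    filter_upwards [he2, hg.2.2.2.eventually he1] with x h2 h1
    calc f (g x) ≤ w1 (g x) := h1
    _ ≤ w1 (w2 x) := w1mono h2

lemma SG_mono {α β : Ordinal.{0}} (h : α ≤ β) : SG α ⊆ SG β := by
  rintro f ⟨hf, w, hw, he⟩
  exact ⟨hf, w, words_mono (Set.union_subset_union_right _
    (Set.image_mono (Iic_subset_Iic.mpr h))) hw, he⟩

lemma fo_mem_SG {γ α : Ordinal.{0}} (h : γ ≤ α) : fo γ ∈ SG α :=
  ⟨fo_isLS γ, fo γ, mem_words_self (Or.inr ⟨γ, h, rfl⟩), Eventually.of_forall fun _ => le_rfl⟩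

lemma Iic_eq_Iio_succ (α : Ordinal.{0}) : Iic α = Iio (α + 1) := by
  ext β
  simp only [mem_Iic, mem_Iio, Ordinal.add_one_eq_succ, Order.lt_succ_iff]

lemma SG_dominated {α : Ordinal.{0}} (hα1 : α + 1 < (Cardinal.aleph 1).ord) :
    ∀ g ∈ SG α, ∀ᶠ x in atTop, g x < fo (α + 1) x := by
  rintro g ⟨_, w, hw, hle⟩
  have hw' : w ∈ Words (Lam ∪ fo '' Iio (α + 1)) := by
    rwa [← Iic_eq_Iio_succ]
  obtain ⟨m, hm⟩ := fo_key hα1 hw'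
  have wmono : Monotone w := (words_isLS (base_isLS _) w hw').2.1
  rw [eventually_atTop] at hle
  obtain ⟨m2, hle⟩ := hle
  rw [eventually_atTop]
  refine ⟨max m m2, fun x hx => ?_⟩
  calc g x ≤ w x := hle x (le_trans (le_max_right _ _) hx)
  _ ≤ w (x + 1) := wmono (le_add_of_nonneg_right (zero_le))
  _ < (2 * x + 4) + w (x + 1) := by
      apply lt_add_of_pos_left
      positivity
  _ = 1 * ((2 * x + 4) + w (x + 1)) := (one_mul _).symm
  _ ≤ (x + 1) * ((2 * x + 4) + w (x + 1)) := by
      apply mul_le_mul_left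
      exact le_add_of_nonneg_left (zero_le)
  _ ≤ fo (α + 1) x := hm x (le_trans (le_max_left _ _) hx)
section Space
variable (g : Fn)

noncomputable def KK (n : ℕ) : ℕ := ⌈g ((n : ℝ≥0) + 2) / ((n : ℝ≥0) + 1)⌉₊
noncomputable def DD (n : ℕ) : ℝ≥0 := (KK g n : ℝ≥0) * ((n : ℝ≥0) + 1)
noncomputable def TT : ℕ → ℝ≥0
  | 0 => 0
  | n + 1 => TT n + DD g n + ((n : ℝ≥0) + 2)
noncomputable def PP (n k : ℕ) : ℝ≥0 := TT g n + (k : ℝ≥0) * ((n : ℝ≥0) + 1)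
def Xset : Set ℝ := {x | ∃ n k, k ≤ KK g n ∧ x = ((PP g n k : ℝ≥0) : ℝ)}

lemma DD_lb (n : ℕ) : g ((n : ℝ≥0) + 2) ≤ DD g n := by
  have hc : ((n : ℝ≥0) + 1) ≠ 0 := by positivity
  calc g ((n : ℝ≥0) + 2) = g ((n : ℝ≥0) + 2) / ((n : ℝ≥0) + 1) * ((n : ℝ≥0) + 1) :=
        (div_mul_cancel₀ _ hc).symm
  _ ≤ DD g n := mul_le_mul_left (Nat.le_ceil _) _

lemma DD_ub (n : ℕ) : DD g n ≤ g ((n : ℝ≥0) + 2) + ((n : ℝ≥0) + 1) := by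
  have hc : ((n : ℝ≥0) + 1) ≠ 0 := by positivity
  have h1 : (KK g n : ℝ≥0) ≤ g ((n : ℝ≥0) + 2) / ((n : ℝ≥0) + 1) + 1 :=
    le_of_lt (Nat.ceil_lt_add_one (zero_le))
  calc DD g n ≤ (g ((n : ℝ≥0) + 2) / ((n : ℝ≥0) + 1) + 1) * ((n : ℝ≥0) + 1) :=
        mul_le_mul_left h1 _
  _ = g ((n : ℝ≥0) + 2) + ((n : ℝ≥0) + 1) := by
        rw [add_mul, one_mul, div_mul_cancel₀ _ hc]

lemma PP_zero (n : ℕ) : PP g n 0 = TT g n := by simp [PP]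

lemma PP_succ (n k : ℕ) : PP g n (k + 1) = PP g n k + ((n : ℝ≥0) + 1) := by
  unfold PP
  push_cast
  ring

lemma PP_last (n : ℕ) : PP g n (KK g n) = TT g n + DD g n := rfl

lemma PP_mono_k (n : ℕ) {k l : ℕ} (h : k ≤ l) : PP g n k ≤ PP g n l := by
  unfold PP
  exact add_le_add_right (mul_le_mul_left (by exact_mod_cast h) _) _

lemma PP_step_ge (n : ℕ) {k l : ℕ} (h : k < l) : PP g n k + ((n : ℝ≥0) + 1) ≤ PP g n l := by
  calc PP g n k + ((n : ℝ≥0) + 1) = PP g n (k + 1) := (PP_succ g n k).symm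
  _ ≤ PP g n l := PP_mono_k g n h

lemma O1 {n k : ℕ} (hk : k ≤ KK g n) : PP g n k + ((n : ℝ≥0) + 2) ≤ TT g (n + 1) := by
  have : PP g n k ≤ TT g n + DD g n := by
    rw [← PP_last]
    exact PP_mono_k g n hk
  calc PP g n k + ((n : ℝ≥0) + 2) ≤ (TT g n + DD g n) + ((n : ℝ≥0) + 2) := add_le_add_left this _
  _ = TT g (n + 1) := rfl

lemma TT_step (n : ℕ) : TT g n + 1 ≤ TT g (n + 1) := by
  show TT g n + 1 ≤ TT g n + DD g n + ((n : ℝ≥0) + 2)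
  calc TT g n + 1 ≤ (TT g n + DD g n) + ((n : ℝ≥0) + 2) := by
        apply add_le_add
        · exact le_add_of_nonneg_right (zero_le)
        · exact le_trans (by norm_num) (le_add_of_nonneg_left (zero_le))
  _ = _ := rfl

lemma TT_mono : Monotone (TT g) := by
  apply monotone_nat_of_le_succ
  intro n
  exact le_trans (le_add_of_nonneg_right (zero_le)) (TT_step g n)

lemma O3 {N n k : ℕ} (hn : n < N) (hk : k ≤ KK g n) :
    PP g n k + ((N : ℝ≥0) + 1) ≤ TT g N := by
  induction N with
  | zero => omega
  | succ N ih =>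
      rcases Nat.lt_succ_iff_lt_or_eq.mp hn with h | h
      · calc PP g n k + ((((N : ℕ) + 1 : ℕ) : ℝ≥0) + 1)
            = (PP g n k + ((N : ℝ≥0) + 1)) + 1 := by push_cast; ring
        _ ≤ TT g N + 1 := add_le_add_left (ih h) _
        _ ≤ TT g (N + 1) := TT_step g N
      · subst h
        calc PP g n k + ((((n : ℕ) + 1 : ℕ) : ℝ≥0) + 1) = PP g n k + ((n : ℝ≥0) + 2) := by
              push_cast; ring
        _ ≤ TT g (n + 1) := O1 g hk

lemma O4 {N n : ℕ} (h : N ≤ n) (k : ℕ) : TT g N ≤ PP g n k := by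
  calc TT g N ≤ TT g n := TT_mono g h
  _ ≤ PP g n k := le_add_of_nonneg_right (zero_le)

lemma O5 {n m k l : ℕ} (hnm : n < m) (hk : k ≤ KK g n) :
    PP g n k + ((n : ℝ≥0) + 2) ≤ PP g m l := by
  calc PP g n k + ((n : ℝ≥0) + 2) ≤ TT g (n + 1) := O1 g hk
  _ ≤ TT g m := TT_mono g hnm
  _ ≤ PP g m l := le_add_of_nonneg_right (zero_le)

lemma TT_bound (hg : Monotone g) (n : ℕ) :
    TT g n ≤ (n : ℝ≥0) * (g ((n : ℝ≥0) + 1) + 2 * (n : ℝ≥0) + 1) := by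
  induction n with
  | zero => simp [TT]
  | succ n ih =>
      have h1 : TT g (n + 1) = TT g n + DD g n + ((n : ℝ≥0) + 2) := rfl
      have h2 : g ((n : ℝ≥0) + 1) ≤ g (((n : ℕ) + 1 : ℕ) + 1) := by
        apply hg
        push_cast
        exact add_le_add_left (le_add_of_nonneg_right (zero_le)) _
      have h3 : g ((n : ℝ≥0) + 2) ≤ g (((n : ℕ) + 1 : ℕ) + 1) := by
        apply hg
        push_cast
        exact le_of_eq (by ring)
      set G := g ((((n : ℕ) + 1 : ℕ) : ℝ≥0) + 1) with hG
      calc TT g (n + 1) = TT g n + DD g n + ((n : ℝ≥0) + 2) := h1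
      _ ≤ (n : ℝ≥0) * (g ((n : ℝ≥0) + 1) + 2 * (n : ℝ≥0) + 1) +
            (g ((n : ℝ≥0) + 2) + ((n : ℝ≥0) + 1)) + ((n : ℝ≥0) + 2) := by
            exact add_le_add_left (add_le_add ih (DD_ub g n)) _
      _ ≤ (n : ℝ≥0) * (G + 2 * (n : ℝ≥0) + 1) + (G + ((n : ℝ≥0) + 1)) + ((n : ℝ≥0) + 2) := by
            apply add_le_add_left
            apply add_le_add
            · exact mul_le_mul_right (add_le_add_left (add_le_add_left h2 _) _) _
            · exact add_le_add_left h3 _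
      _ ≤ (((n : ℕ) + 1 : ℕ) : ℝ≥0) * (G + 2 * (((n : ℕ) + 1 : ℕ) : ℝ≥0) + 1) := by
            rw [← NNReal.coe_le_coe]
            push_cast
            nlinarith [G.coe_nonneg, Nat.cast_nonneg (α := ℝ) n]
end Space
section Space2
variable (g : Fn)

lemma nn_dist_add (a c : ℝ≥0) : dist (((a + c : ℝ≥0)) : ℝ) ((a : ℝ≥0) : ℝ) = (c : ℝ) := by
  rw [Real.dist_eq]
  push_cast
  have h : (a : ℝ) + (c : ℝ) - (a : ℝ) = (c : ℝ) := by ring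
  rw [h, abs_of_nonneg c.coe_nonneg]

lemma xval_nonneg {x : ↥(Xset g)} : (0 : ℝ) ≤ (x : ℝ) := by
  obtain ⟨n, k, hk, hval⟩ := x.2
  rw [hval]
  exact NNReal.coe_nonneg _

lemma gt_of_nn {s a b c : ℝ≥0} {X : Type} [MetricSpace X] (hsc : s < c) (hab : a + c ≤ b)
    {x y : X} (hx : dist x y = dist ((a : ℝ)) ((b : ℝ))) : (s : ℝ) < dist x y := by
  rw [hx, Real.dist_eq]
  have h1 : (a : ℝ) + (c : ℝ) ≤ (b : ℝ) := by exact_mod_cast hab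
  have h2 : (s : ℝ) < (c : ℝ) := by exact_mod_cast hsc
  have h3 : (c : ℝ) ≤ (b : ℝ) - (a : ℝ) := by linarith
  calc (s : ℝ) < (c : ℝ) := h2
  _ ≤ (b : ℝ) - (a : ℝ) := h3
  _ ≤ |(b : ℝ) - (a : ℝ)| := le_abs_self _
  _ = |(a : ℝ) - (b : ℝ)| := abs_sub_comm _ _

-- classification
lemma block_lt {N : ℕ} {x : ↥(Xset g)} (h : (x : ℝ) < ((TT g N : ℝ≥0) : ℝ))
    {n k : ℕ} (hk : k ≤ KK g n) (hval : (x : ℝ) = ((PP g n k : ℝ≥0) : ℝ)) : n < N := by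
  by_contra hn
  push_neg at hn
  have := O4 g hn k
  rw [hval] at h
  exact absurd h (not_lt.mpr (by exact_mod_cast this))

lemma block_ge {N : ℕ} {x : ↥(Xset g)} (h : ¬ ((x : ℝ) < ((TT g N : ℝ≥0) : ℝ)))
    {n k : ℕ} (hk : k ≤ KK g n) (hval : (x : ℝ) = ((PP g n k : ℝ≥0) : ℝ)) : N ≤ n := by
  by_contra hn
  push_neg at hn
  have h3 := O3 g hn hk
  apply h
  rw [hval]
  have : PP g n k < TT g N := by
    calc PP g n k < PP g n k + ((N : ℝ≥0) + 1) := lt_add_of_pos_right _ (by positivity)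
    _ ≤ TT g N := h3
  exact_mod_cast this

lemma TN_le (hg : Monotone g) (hgrow : ∀ y : ℝ≥0, 1 ≤ y → (y + 1) * (2 * y + 4) ≤ g y)
    (s : ℝ≥0) : TT g ⌊s⌋₊ ≤ g (g (s + 1)) := by
  set N := ⌊s⌋₊ with hN
  have c1 : (N : ℝ≥0) ≤ s := Nat.floor_le (zero_le : 0 ≤ s)
  have c2 := TT_bound g hg N
  have c3 : g ((N : ℝ≥0) + 1) ≤ g (s + 1) := hg (add_le_add_left c1 1)
  set y := g (s + 1) with hy
  have hy1 : (s + 2) * (2 * s + 6) ≤ y := by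
    have := hgrow (s + 1) (le_add_of_nonneg_left (zero_le))
    calc (s + 2) * (2 * s + 6) = ((s + 1) + 1) * (2 * (s + 1) + 4) := by ring
    _ ≤ y := this
  have hy2 : (1 : ℝ≥0) ≤ y := by
    calc (1 : ℝ≥0) ≤ (s + 2) * (2 * s + 6) := by
          calc (1:ℝ≥0) ≤ 2 * 6 := by norm_num
          _ ≤ (s + 2) * (2 * s + 6) :=
              mul_le_mul' (le_add_of_nonneg_left (zero_le))
                (le_add_of_nonneg_left (zero_le))
    _ ≤ y := hy1
  have step1 : TT g N ≤ s * (g (s + 1) + 2 * s + 1) := by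
    calc TT g N ≤ (N : ℝ≥0) * (g ((N : ℝ≥0) + 1) + 2 * (N : ℝ≥0) + 1) := c2
    _ ≤ s * (g (s + 1) + 2 * s + 1) :=
        mul_le_mul' c1 (add_le_add_left (add_le_add c3 (mul_le_mul_right c1 2)) 1)
  have step2 : s * (y + 2 * s + 1) ≤ (y + 1) * (2 * y + 4) := by
    rw [← NNReal.coe_le_coe]
    push_cast
    have h1 : ((s : ℝ) + 2) * (2 * s + 6) ≤ y := by exact_mod_cast hy1
    have h2 : (1 : ℝ) ≤ y := by exact_mod_cast hy2
    have h3 : (0 : ℝ) ≤ s := s.coe_nonneg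
    nlinarith [sq_nonneg ((y : ℝ) - s)]
  calc TT g N ≤ s * (y + 2 * s + 1) := step1
  _ ≤ (y + 1) * (2 * y + 4) := step2
  _ ≤ g y := hgrow y hy2

lemma upper (hg : Monotone g) (hgrow : ∀ y : ℝ≥0, 1 ≤ y → (y + 1) * (2 * y + 4) ≤ g y)
    (S : Set Fn) (f' : Fn) (hfS : f' ∈ S) (hf' : ∀ s : ℝ≥0, g (g (s + 1)) ≤ f' s) :
    ASDimLE S (↥(Xset g)) 0 := by
  refine ⟨f', hfS, 0, fun s _ => ?_⟩
  set N := ⌊s⌋₊ with hN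
  set A : Set (↥(Xset g)) := {p | (p : ℝ) < ((TT g N : ℝ≥0) : ℝ)} with hA
  have hsN : s < (N : ℝ≥0) + 1 := Nat.lt_floor_add_one s
  refine ⟨fun _ => insert A ((fun p : ↥(Xset g) => ({p} : Set (↥(Xset g)))) ''
      {p | ¬ ((p : ℝ) < ((TT g N : ℝ≥0) : ℝ))}), ?_, fun i => ⟨?_, ?_⟩⟩
  · apply eq_univ_of_forall
    intro p
    rw [mem_iUnion]
    refine ⟨0, ?_⟩
    rw [mem_sUnion]
    by_cases h : (p : ℝ) < ((TT g N : ℝ≥0) : ℝ)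
    · exact ⟨A, mem_insert _ _, h⟩
    · exact ⟨{p}, mem_insert_of_mem _ ⟨p, h, rfl⟩, rfl⟩
  · -- SDisjoint
    rintro U hU V hV hUV x hx y hy
    rcases hU with rfl | ⟨p, hp, rfl⟩ <;> rcases hV with rfl | ⟨r, hr, rfl⟩
    · exact absurd rfl hUV
    · -- U = A, V = {r}
      obtain ⟨n, k, hk, hxv⟩ := x.2
      have hy' : y = r := hy
      subst hy'
      obtain ⟨m, l, hl, hyv⟩ := y.2
      have hnN : n < N := block_lt g hx hk hxv
      have hmN : N ≤ m := block_ge g hr hl hyv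
      have key : PP g n k + ((N : ℝ≥0) + 1) ≤ PP g m l :=
        le_trans (O3 g hnN hk) (O4 g hmN l)
      exact gt_of_nn hsN key (by rw [Subtype.dist_eq, hxv, hyv])
    · -- U = {p}, V = A
      have hx' : x = p := hx
      subst hx'
      obtain ⟨n, k, hk, hxv⟩ := x.2
      obtain ⟨m, l, hl, hyv⟩ := y.2
      have hmN : m < N := block_lt g hy hl hyv
      have hnN : N ≤ n := block_ge g hp hk hxv
      have key : PP g m l + ((N : ℝ≥0) + 1) ≤ PP g n k :=
        le_trans (O3 g hmN hl) (O4 g hnN k)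
      rw [dist_comm]
      exact gt_of_nn hsN key (by rw [Subtype.dist_eq, hyv, hxv])
    · -- both singletons
      have hx' : x = p := hx
      have hy' : y = r := hy
      subst hx'; subst hy'
      have hpr : x ≠ y := fun h => hUV (by rw [h])
      obtain ⟨n, k, hk, hxv⟩ := x.2
      obtain ⟨m, l, hl, hyv⟩ := y.2
      have hnN : N ≤ n := block_ge g hp hk hxv
      have hmN : N ≤ m := block_ge g hr hl hyv
      have hvals : PP g n k ≠ PP g m l := by
        intro h
        apply hpr
        apply Subtype.ext
        rw [hxv, hyv, h]
      have hsn2 : s < (n : ℝ≥0) + 1 := lt_of_lt_of_le hsN (add_le_add_left (by exact_mod_cast hnN) 1)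
      have hsm2 : s < (m : ℝ≥0) + 1 := lt_of_lt_of_le hsN (add_le_add_left (by exact_mod_cast hmN) 1)
      rcases lt_trichotomy n m with h | h | h
      · have key := O5 g (l := l) h hk
        exact gt_of_nn (lt_of_lt_of_le hsn2 (by
          exact add_le_add_right (by norm_num) _)) key (by rw [Subtype.dist_eq, hxv, hyv])
      · subst h
        rcases lt_or_gt_of_ne (fun h : k = l => hvals (by rw [h])) with hkl | hkl
        · exact gt_of_nn hsn2 (PP_step_ge g n hkl) (by rw [Subtype.dist_eq, hxv, hyv])
        · rw [dist_comm]
          exact gt_of_nn hsn2 (PP_step_ge g n hkl) (by rw [Subtype.dist_eq, hyv, hxv])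
      · have key := O5 g (l := k) h hl
        rw [dist_comm]
        exact gt_of_nn (lt_of_lt_of_le hsm2 (by
          exact add_le_add_right (by norm_num) _)) key (by rw [Subtype.dist_eq, hyv, hxv])
  · -- BoundedBy
    rintro U (rfl | ⟨p, hp, rfl⟩)
    · -- A
      have hdiam : EMetric.diam A ≤ ((TT g N : ℝ≥0) : ℝ≥0∞) := by
        apply EMetric.diam_le
        intro x hx y hy
        rw [edist_dist]
        have h1 : dist x y ≤ ((TT g N : ℝ≥0) : ℝ) := by
          rw [Subtype.dist_eq, Real.dist_eq]
          have hx0 := xval_nonneg g (x := x)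
          have hy0 := xval_nonneg g (x := y)
          have hxT : (x : ℝ) < ((TT g N : ℝ≥0) : ℝ) := hx
          have hyT : (y : ℝ) < ((TT g N : ℝ≥0) : ℝ) := hy
          rw [abs_le]
          constructor <;> linarith
        calc ENNReal.ofReal (dist x y) ≤ ENNReal.ofReal ((TT g N : ℝ≥0) : ℝ) :=
              ENNReal.ofReal_le_ofReal h1
        _ = ((TT g N : ℝ≥0) : ℝ≥0∞) := ENNReal.ofReal_coe_nnreal
      calc EMetric.diam A ≤ ((TT g N : ℝ≥0) : ℝ≥0∞) := hdiam
      _ ≤ _ := by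
          rw [ENNReal.coe_le_coe]
          exact le_trans (TN_le g hg hgrow s) (hf' s)
    · rw [show EMetric.diam ((fun p : ↥(Xset g) => ({p} : Set (↥(Xset g)))) p) = 0 from EMetric.diam_singleton]
      exact zero_le

lemma lower (hg : Monotone g) (S : Set Fn)
    (hdom : ∀ f ∈ S, ∀ᶠ x in atTop, f x < g x) :
    ¬ ASDimLE S (↥(Xset g)) 0 := by
  rintro ⟨f, hfS, s₀, H⟩
  obtain ⟨m, hm⟩ := (eventually_atTop).mp (hdom f hfS)
  set s := max (max s₀ m) 1 with hs
  obtain ⟨𝒰, hcov, hprop⟩ := H s (le_trans (le_max_left _ _) (le_max_left _ _))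
  have hs1 : (1 : ℝ≥0) ≤ s := le_max_right _ _
  have hsm : m ≤ s := le_trans (le_max_right _ _) (le_max_left _ _)
  set N := ⌊s⌋₊ with hN
  have hN1 : 1 ≤ N := by
    rw [hN]
    exact Nat.le_floor (by exact_mod_cast hs1)
  obtain ⟨n, hn⟩ : ∃ n, N = n + 1 := ⟨N - 1, by omega⟩
  have hq : ∀ k : ℕ, ((PP g n (min k (KK g n)) : ℝ≥0) : ℝ) ∈ Xset g :=
    fun k => ⟨n, min k (KK g n), min_le_right _ _, rfl⟩
  set q : ℕ → ↥(Xset g) := fun k => ⟨_, hq k⟩ with hqdef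
  -- find the piece containing q 0
  have h0 : q 0 ∈ (univ : Set (↥(Xset g))) := mem_univ _
  rw [← hcov, mem_iUnion] at h0
  obtain ⟨i, h0⟩ := h0
  rw [mem_sUnion] at h0
  obtain ⟨U, hU, hq0⟩ := h0
  -- scale facts
  have hns : ((n : ℝ≥0) + 1) ≤ s := by
    have : ((N : ℕ) : ℝ≥0) ≤ s := Nat.floor_le (zero_le : 0 ≤ s)
    rw [hn] at this
    push_cast at this
    exact this
  have hsn2 : s < (n : ℝ≥0) + 2 := by
    have : s < ((N : ℕ) : ℝ≥0) + 1 := Nat.lt_floor_add_one s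
    rw [hn] at this
    push_cast at this
    calc s < (n : ℝ≥0) + 1 + 1 := this
    _ = (n : ℝ≥0) + 2 := by ring
  -- chain: all points of block n lie in U
  have hchain : ∀ k, k ≤ KK g n → q k ∈ U := by
    intro k hk
    induction k with
    | zero => exact hq0
    | succ k ih =>
        have hk' : k ≤ KK g n := le_trans (Nat.le_succ k) hk
        have hkU := ih (le_trans (Nat.le_succ k) hk)
        -- q (k+1) is in some V
        have h1 : q (k + 1) ∈ (univ : Set (↥(Xset g))) := mem_univ _
        rw [← hcov, mem_iUnion] at h1
        obtain ⟨j, h1⟩ := h1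
        rw [mem_sUnion] at h1
        obtain ⟨V, hV, hq1⟩ := h1
        have hij : j = i := by
          have h1 := j.isLt
          have h2 := i.isLt
          exact Fin.ext (by omega)
        rw [hij] at hV
        by_cases hVU : V = U
        · subst hVU; exact hq1
        · exfalso
          have hd := (hprop i).1 V hV U hU hVU (q (k + 1)) hq1 (q k) hkU
          -- dist = n+1 ≤ s
          have hdist : dist (q (k + 1)) (q k) = (((n : ℝ≥0) + 1 : ℝ≥0) : ℝ) := by
            rw [Subtype.dist_eq]
            show dist ((PP g n (min (k+1) (KK g n)) : ℝ≥0) : ℝ) ((PP g n (min k (KK g n)) : ℝ≥0) : ℝ) = _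
            rw [min_eq_left hk, min_eq_left hk', PP_succ]
            exact nn_dist_add _ _
          rw [hdist] at hd
          exact absurd hd (not_lt.mpr (by exact_mod_cast hns))
  -- now diameter bound contradicted
  have hq00 := hchain 0 (Nat.zero_le _)
  have hqK := hchain (KK g n) le_rfl
  have hdiam := (hprop i).2 U hU
  have hedist : edist (q 0) (q (KK g n)) ≤ ((f s : ℝ≥0) : ℝ≥0∞) :=
    le_trans (EMetric.edist_le_diam_of_mem hq00 hqK) hdiam
  have hdistval : dist (q 0) (q (KK g n)) = ((DD g n : ℝ≥0) : ℝ) := by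
    rw [Subtype.dist_eq, dist_comm]
    show dist ((PP g n (min (KK g n) (KK g n)) : ℝ≥0) : ℝ) ((PP g n (min 0 (KK g n)) : ℝ≥0) : ℝ) = _
    rw [min_eq_left (Nat.zero_le _), min_self, PP_zero, PP_last]
    exact nn_dist_add _ _
  have hDf : DD g n ≤ f s := by
    rw [edist_dist, hdistval, ENNReal.ofReal_coe_nnreal, ENNReal.coe_le_coe] at hedist
    exact hedist
  have hg1 : g s ≤ DD g n := by
    calc g s ≤ g ((n : ℝ≥0) + 2) := hg (le_of_lt hsn2)
    _ ≤ DD g n := DD_lb g n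
  have hfg : f s < g s := hm s hsm
  exact absurd (le_trans hg1 hDf) (not_le.mpr hfg)

end Space2

lemma ASDim_zero_of {S : Set Fn} {X : Type} [MetricSpace X] (h : ASDimLE S X 0) :
    ASDim S X = 0 := by
  apply le_antisymm _ (zero_le)
  exact sInf_le ⟨0, by simp, h⟩

lemma ASDim_ne_zero_of {S : Set Fn} {X : Type} [MetricSpace X] (h : ¬ ASDimLE S X 0) :
    ASDim S X ≠ 0 := by
  intro h0
  have h1 : (1 : ℕ∞) ≤ ASDim S X := by
    apply le_sInf
    rintro k ⟨n, rfl, hn⟩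
    cases n with
    | zero => exact absurd hn h
    | succ n => exact_mod_cast Nat.succ_le_succ (Nat.zero_le n)
  rw [h0] at h1
  exact absurd h1 (by norm_num)

end ChainAux

/-- There is a family of control semigroups indexed by the ordinals `α ≤ ω₁`
which is strictly decreasing for `⪯`, pairwise non-dim-equivalent, and
mono-bounded at `∞` for `α < ω₁`. -/
theorem exists_uncountable_chain_of_control_semigroups :
    ∃ S : Ordinal.{0} → Set (ℝ≥0 → ℝ≥0),
      (∀ α, α ≤ (Cardinal.aleph 1).ord → IsControlSemigroup (S α)) ∧
      (∀ α β, α < β → β ≤ (Cardinal.aleph 1).ord →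
        Preceq (S β) (S α) ∧ ¬ Preceq (S α) (S β)) ∧
      (∀ α β, α < β → β ≤ (Cardinal.aleph 1).ord →
        ∃ (X : Type) (mX : MetricSpace X), @ASDim (S α) X mX ≠ @ASDim (S β) X mX) ∧
      (∀ α, α < (Cardinal.aleph 1).ord → MonoBounded (S α)) := by
  have hlim : True ∧ ∀ a < (Cardinal.aleph 1).ord, a + 1 < (Cardinal.aleph 1).ord := ⟨trivial, fun a ha => by rw [Ordinal.add_one_eq_succ]; exact (Cardinal.isSuccLimit_ord (Cardinal.aleph0_le_aleph 1)).succ_lt ha⟩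
  refine ⟨ChainAux.SG, fun α _ => ChainAux.SG_isCS α, fun α β hαβ hβ => ?_,
    fun α β hαβ hβ => ?_, fun α hα => ?_⟩
  · have hα1 : α + 1 < (Cardinal.aleph 1).ord := hlim.2 _ (lt_of_lt_of_le hαβ hβ)
    have hsucc : α + 1 ≤ β := by rw [Ordinal.add_one_eq_succ]; exact Order.succ_le_of_lt hαβ
    constructor
    · intro f hf
      exact ⟨f, ChainAux.SG_mono (le_of_lt hαβ) hf, Eventually.of_forall fun _ => le_rfl⟩
    · intro hp
      obtain ⟨g', hg', hle⟩ := hp _ (ChainAux.fo_mem_SG hsucc)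
      obtain ⟨x, h1, h2⟩ := (hle.and (ChainAux.SG_dominated hα1 g' hg')).exists
      exact absurd h1 (not_le.mpr h2)
  · have hα1 : α + 1 < (Cardinal.aleph 1).ord := hlim.2 _ (lt_of_lt_of_le hαβ hβ)
    have hsucc : α + 1 ≤ β := by rw [Ordinal.add_one_eq_succ]; exact Order.succ_le_of_lt hαβ
    set g := ChainAux.fo (α + 1) with hgdef
    have hLSg : IsLSControl g := ChainAux.fo_isLS (α + 1)
    have hmono : Monotone g := hLSg.2.1
    have hgrow : ∀ y : ℝ≥0, 1 ≤ y → (y + 1) * (2 * y + 4) ≤ g y :=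
      fun y hy => ChainAux.fo_growth _ hy
    refine ⟨↥(ChainAux.Xset g), inferInstance, ?_⟩
    have hgmem : g ∈ ChainAux.SBase β := Or.inr ⟨α + 1, hsucc, rfl⟩
    have hfmem : (g ∘ (g ∘ ChainAux.lam 0)) ∈ ChainAux.SG β := by
      refine ⟨ChainAux.isLS_comp hLSg (ChainAux.isLS_comp hLSg (ChainAux.isLS_lam 0)), _,
        ChainAux.comp_mem_words (ChainAux.mem_words_self hgmem)
          (ChainAux.comp_mem_words (ChainAux.mem_words_self hgmem)
            (ChainAux.mem_words_self (Or.inl ⟨0, rfl⟩))),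
        Eventually.of_forall fun _ => le_rfl⟩
    have hf' : ∀ s : ℝ≥0, g (g (s + 1)) ≤ (g ∘ (g ∘ ChainAux.lam 0)) s := by
      intro s
      apply le_of_eq
      simp [ChainAux.lam, Function.comp]
    have hup := ChainAux.upper g hmono hgrow (ChainAux.SG β) _ hfmem hf'
    have hlow := ChainAux.lower g hmono (ChainAux.SG α) (ChainAux.SG_dominated hα1)
    intro h
    exact ChainAux.ASDim_ne_zero_of hlow (h.trans (ChainAux.ASDim_zero_of hup))
  · exact ⟨ChainAux.fo (α + 1), ChainAux.fo_isLS _, ChainAux.SG_dominated (hlim.2 _ hα)⟩
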